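/- Let T1 be the tree on 7 vertices consisting of a central vertex of degree 3 each of whose three neighbors has exactly one additional neighbor of degree 1 (the spider S(2,2,2)). Then for every bijective labeling f : V(T1) → {1,...,7}, there exist labels k1 < k2 < k3 < k4 such that either both {k1,k3} and {k2,k4} are edges of the labeled graph, or both {k1,k4} and {k2,k3} are edges. -/

import Mathlib

/-- The spider `T1 = S(2,2,2)`: center `0` adjacent to `1,2,3`, legs `1-4`, `2-5`, `3-6`. -/
def spiderT1 : SimpleGraph (Fin 7) :=
  SimpleGraph.fromEdgeSet {s(0, 1), s(0, 2), s(0, 3), s(1, 4), s(2, 5), s(3, 6)}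

instance : DecidableRel spiderT1.Adj := fun a b =>
  decidable_of_iff ((s(a,b) = s(0,1) ∨ s(a,b) = s(0,2) ∨ s(a,b) = s(0,3) ∨ s(a,b) = s(1,4) ∨ s(a,b) = s(2,5) ∨ s(a,b) = s(3,6)) ∧ a ≠ b)
    (by simp [spiderT1, SimpleGraph.fromEdgeSet_adj])

def adjB : Fin 7 → Fin 7 → Bool := fun a b =>
  match a.val, b.val with
  | 0,1 | 1,0 | 0,2 | 2,0 | 0,3 | 3,0 | 1,4 | 4,1 | 2,5 | 5,2 | 3,6 | 6,3 => true
  | _,_ => false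

def quadList : List (Fin 7 × Fin 7 × Fin 7 × Fin 7) := [(0,1,2,3), (0,1,2,4), (0,1,2,5), (0,1,2,6), (0,1,3,4), (0,1,3,5), (0,1,3,6), (0,1,4,5), (0,1,4,6), (0,1,5,6), (0,2,3,4), (0,2,3,5), (0,2,3,6), (0,2,4,5), (0,2,4,6), (0,2,5,6), (0,3,4,5), (0,3,4,6), (0,3,5,6), (0,4,5,6), (1,2,3,4), (1,2,3,5), (1,2,3,6), (1,2,4,5), (1,2,4,6), (1,2,5,6), (1,3,4,5), (1,3,4,6), (1,3,5,6), (1,4,5,6), (2,3,4,5), (2,3,4,6), (2,3,5,6), (2,4,5,6), (3,4,5,6)]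

def checkG (g : Fin 7 → Fin 7) : Bool :=
  quadList.any fun q =>
    (adjB (g q.1) (g q.2.2.1) && adjB (g q.2.1) (g q.2.2.2)) ||
    (adjB (g q.1) (g q.2.2.2) && adjB (g q.2.1) (g q.2.2.1))

def checkL (l : List (Fin 7)) : Bool := checkG (fun i => l.getD i 0)

set_option maxRecDepth 1000000 in
set_option maxHeartbeats 16000000 in
lemma perms0 : ((([1,2,3,4,5,6] : List (Fin 7)).permutations'.map (fun l => (0:Fin 7) :: l)).all checkL) = true := by decide
set_option maxRecDepth 1000000 in
set_option maxHeartbeats 16000000 in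
lemma perms1 : ((([0,2,3,4,5,6] : List (Fin 7)).permutations'.map (fun l => (1:Fin 7) :: l)).all checkL) = true := by decide
set_option maxRecDepth 1000000 in
set_option maxHeartbeats 16000000 in
lemma perms2 : ((([0,1,3,4,5,6] : List (Fin 7)).permutations'.map (fun l => (2:Fin 7) :: l)).all checkL) = true := by decide
set_option maxRecDepth 1000000 in
set_option maxHeartbeats 16000000 in
lemma perms3 : ((([0,1,2,4,5,6] : List (Fin 7)).permutations'.map (fun l => (3:Fin 7) :: l)).all checkL) = true := by decide
set_option maxRecDepth 1000000 in
set_option maxHeartbeats 16000000 in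
lemma perms4 : ((([0,1,2,3,5,6] : List (Fin 7)).permutations'.map (fun l => (4:Fin 7) :: l)).all checkL) = true := by decide
set_option maxRecDepth 1000000 in
set_option maxHeartbeats 16000000 in
lemma perms5 : ((([0,1,2,3,4,6] : List (Fin 7)).permutations'.map (fun l => (5:Fin 7) :: l)).all checkL) = true := by decide
set_option maxRecDepth 1000000 in
set_option maxHeartbeats 16000000 in
lemma perms6 : ((([0,1,2,3,4,5] : List (Fin 7)).permutations'.map (fun l => (6:Fin 7) :: l)).all checkL) = true := by decide

lemma adj_of_adjB : ∀ a b : Fin 7, adjB a b = true → spiderT1.Adj a b := by decide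

lemma quad_ordered : ∀ q ∈ quadList, q.1 < q.2.1 ∧ q.2.1 < q.2.2.1 ∧ q.2.2.1 < q.2.2.2 := by
  intro q hq
  fin_cases hq <;> exact ⟨by decide, by decide, by decide⟩

lemma checkL_of_perm (l : List (Fin 7)) (h : l.Perm (List.finRange 7)) :
    checkL l = true := by
  have h7 : l.length = 7 := by simpa using h.length_eq
  obtain ⟨a, t, rfl⟩ : ∃ a t, l = a :: t := by
    cases l with
    | nil => simp at h7
    | cons a t => exact ⟨a, t, rfl⟩
  have ht : t.Perm ((List.finRange 7).erase a) := (List.cons_perm_iff_perm_erase.mp h).2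
  fin_cases a
  all_goals {
    first
    | exact List.all_eq_true.mp perms0 _ (List.mem_map_of_mem (List.mem_permutations'.mpr (ht.trans (by decide))))
    | exact List.all_eq_true.mp perms1 _ (List.mem_map_of_mem (List.mem_permutations'.mpr (ht.trans (by decide))))
    | exact List.all_eq_true.mp perms2 _ (List.mem_map_of_mem (List.mem_permutations'.mpr (ht.trans (by decide))))
    | exact List.all_eq_true.mp perms3 _ (List.mem_map_of_mem (List.mem_permutations'.mpr (ht.trans (by decide))))
    | exact List.all_eq_true.mp perms4 _ (List.mem_map_of_mem (List.mem_permutations'.mpr (ht.trans (by decide))))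
    | exact List.all_eq_true.mp perms5 _ (List.mem_map_of_mem (List.mem_permutations'.mpr (ht.trans (by decide))))
    | exact List.all_eq_true.mp perms6 _ (List.mem_map_of_mem (List.mem_permutations'.mpr (ht.trans (by decide)))) }

/-- for every bijective labeling of `T1` by `{1,…,7}` there are labels
`k1 < k2 < k3 < k4` forming a forbidden configuration `H1` or `H2`. -/
theorem spiderT1_every_labeling_has_forbidden (f : Fin 7 ≃ Fin 7) :
    ∃ k1 k2 k3 k4 : Fin 7, k1 < k2 ∧ k2 < k3 ∧ k3 < k4 ∧
      ((spiderT1.Adj (f.symm k1) (f.symm k3) ∧ spiderT1.Adj (f.symm k2) (f.symm k4)) ∨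
       (spiderT1.Adj (f.symm k1) (f.symm k4) ∧ spiderT1.Adj (f.symm k2) (f.symm k3))) := by
  set l : List (Fin 7) := List.ofFn f.symm with hl
  have hperm : l.Perm (List.finRange 7) := by
    apply List.perm_of_nodup_nodup_toFinset_eq
    · exact List.nodup_ofFn.mpr f.symm.injective
    · exact List.nodup_finRange 7
    · apply Finset.ext
      intro x
      simp only [List.mem_toFinset, List.mem_finRange, iff_true, hl]
      rw [List.mem_ofFn]
      exact ⟨f x, f.symm_apply_apply x⟩
  have hc : checkL l = true := checkL_of_perm l hperm
  have hg : (fun i : Fin 7 => l.getD i 0) = f.symm := by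
    funext i
    rw [hl, List.getD_eq_getElem _ _ (by simp), List.getElem_ofFn]
  have hcg : checkG f.symm = true := by rw [← hg]; exact hc
  rw [checkG, List.any_eq_true] at hcg
  obtain ⟨q, hq, hcond⟩ := hcg
  obtain ⟨h12, h23, h34⟩ := quad_ordered q hq
  refine ⟨q.1, q.2.1, q.2.2.1, q.2.2.2, h12, h23, h34, ?_⟩
  simp only [Bool.or_eq_true, Bool.and_eq_true] at hcond
  rcases hcond with ⟨ha, hb⟩ | ⟨ha, hb⟩
  · exact Or.inl ⟨adj_of_adjB _ _ ha, adj_of_adjB _ _ hb⟩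
  · exact Or.inr ⟨adj_of_adjB _ _ ha, adj_of_adjB _ _ hb⟩
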